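/- Let X₁,…,Xₙ be independent identically distributed random variables with values in the unit circle S¹, with common distribution μ satisfying μ({p}) = 0 for every p ∈ S¹ (μ is non-atomic). Then, almost surely, the empirical Fréchet functional F_{μⁿ}(p) = (1/(2n)) Σ_{i=1}^n d(p,Xᵢ)² has a unique global minimizer on S¹ (the empirical Fréchet mean exists). -/

import Mathlib

open MeasureTheory Real Set Filter

noncomputable section

/-- The unit circle `S¹` in `ℝ² ≃ ℂ`. -/
abbrev S1 := {x : ℂ // ‖x‖ = 1}

/-- The arclength distance on `S¹`. -/
def dS1 (x p : S1) : ℝ := 2 * Real.arcsin (‖(x : ℂ) - (p : ℂ)‖ / 2)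

/-- The Fréchet functional of a measure `μ` on `S¹`. -/
def frechet (μ : Measure S1) (p : S1) : ℝ := (1/2) * ∫ x, (dS1 x p)^2 ∂μ

/-- The normal coordinate chart centered at `p`: `θ ↦ R_θ p`. -/
def chart (p : S1) (θ : ℝ) : S1 :=
  ⟨Complex.exp (θ * Complex.I) * (p : ℂ), by
    rw [norm_mul, Complex.norm_exp_ofReal_mul_I, p.2, mul_one]⟩

/-- The inverse chart, with values in `[-π, π)`. -/
def invChart (p₀ : S1) (p : S1) : ℝ :=
  if Complex.arg ((p : ℂ) / (p₀ : ℂ)) = π then -π else Complex.arg ((p : ℂ) / (p₀ : ℂ))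

/-- The image measure `μ_{p₀}` of `μ` in the normal chart centered at `p₀`. -/
def chartMeasure (μ : Measure S1) (p₀ : S1) : Measure ℝ := Measure.map (invChart p₀) μ

/-- `m(μ_{p₀})`, the Euclidean mean of the image measure in the chart centered at `p₀`. -/
def mMean (μ : Measure S1) (p₀ : S1) : ℝ := ∫ t, t ∂(chartMeasure μ p₀)

/-- The antipodal point (cut locus) of `p`. -/
def antipode (p : S1) : S1 := ⟨-(p : ℂ), by rw [norm_neg]; exact p.2⟩

/-- The (left-continuous extension of the) derivative of `θ ↦ F_μ(e_{p₀}(θ))`. -/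
def extDerivS1 (μ : Measure S1) (p₀ : S1) (θ : ℝ) : ℝ :=
  if 0 ≤ θ then θ - 2*π*(chartMeasure μ p₀ (Ico (-π) (-π+θ))).toReal - mMean μ p₀
  else θ + 2*π*(chartMeasure μ p₀ (Ico (π+θ) π)).toReal - mMean μ p₀

def basePt : S1 := ⟨1, by norm_num⟩

/-- The (unnormalized) arclength measure on `S¹`, of total mass `2π`. -/
def arcMeasure : Measure S1 := Measure.map (chart basePt) (volume.restrict (Ico (-π) π))

/-- Property `P(p, α, φ)` for a density `f` on `S¹`. -/
def propP (f : S1 → ℝ) (p : S1) (α φ : ℝ) : Prop :=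
  ∀ θ ∈ Ico (-π) π, φ ≤ |θ| → f (chart p θ) ≤ (1 - α)/(2*π)

instance : Nonempty S1 := ⟨basePt⟩

instance : CompactSpace S1 := by
  have h : IsCompact {x : ℂ | ‖x‖ = 1} := by
    have : {x : ℂ | ‖x‖ = 1} = Metric.sphere 0 1 := by ext x; simp [mem_sphere_zero_iff_norm]
    rw [this]; exact isCompact_sphere 0 1
  exact isCompact_iff_compactSpace.mp h

-- chart_invChart
lemma chart_invChart (x : S1) : chart basePt (invChart basePt x) = x := by
  have hx : ‖(x : ℂ)‖ * Complex.exp (Complex.arg (x:ℂ) * Complex.I) = (x:ℂ) :=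
    Complex.norm_mul_exp_arg_mul_I _
  have hax : ‖(x:ℂ)‖ = 1 := by exact x.2
  rw [hax, Complex.ofReal_one, one_mul] at hx
  apply Subtype.ext
  show Complex.exp (↑(invChart basePt x) * Complex.I) * ((basePt : S1) : ℂ) = (x : ℂ)
  have hb : ((basePt : S1) : ℂ) = 1 := rfl
  rw [hb, mul_one, invChart]
  have hdiv : (x : ℂ) / ((basePt : S1) : ℂ) = (x : ℂ) := by rw [hb, div_one]
  rw [hdiv]
  split_ifs with h
  · have hcast : ((-π : ℝ) : ℂ) * Complex.I = -((π:ℝ) * Complex.I) := by push_cast; ring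
    rw [hcast, Complex.exp_neg, ← hx, h]
    norm_num [Complex.exp_pi_mul_I]
  · exact hx

lemma invChart_mem (x : S1) : invChart basePt x ∈ Ico (-π) π := by
  rw [invChart]
  split_ifs with h
  · constructor <;> [exact le_refl _; linarith [pi_pos]]
  · have h1 := Complex.neg_pi_lt_arg ((x:ℂ) / ((basePt : S1):ℂ))
    have h2 := Complex.arg_le_pi ((x:ℂ) / ((basePt : S1):ℂ))
    exact ⟨le_of_lt h1, lt_of_le_of_ne h2 h⟩

/-- chord-angle function -/
def Afun (s : ℝ) : ℝ := 2 * Real.arcsin (‖Complex.exp ((s:ℂ) * Complex.I) - 1‖ / 2)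

lemma dS1_chart (α β : ℝ) : dS1 (chart basePt α) (chart basePt β) = Afun (α - β) := by
  have hb : ((basePt : S1) : ℂ) = 1 := rfl
  have : ((chart basePt α : S1) : ℂ) - ((chart basePt β : S1) : ℂ)
      = Complex.exp ((β:ℂ) * Complex.I) * (Complex.exp ((↑(α - β) : ℂ) * Complex.I) - 1) := by
    show Complex.exp ((α:ℂ) * Complex.I) * 1 - Complex.exp ((β:ℂ) * Complex.I) * 1 = _
    rw [mul_sub, ← Complex.exp_add]
    push_cast; ring_nf
  rw [dS1, Afun, this, norm_mul, Complex.norm_exp_ofReal_mul_I, one_mul]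

lemma norm_exp_sub_one (s : ℝ) : ‖Complex.exp ((s:ℂ) * Complex.I) - 1‖ = 2 * |Real.sin (s/2)| := by
  have key : Complex.exp ((s:ℂ) * Complex.I) - 1
      = Complex.exp ((↑(s/2):ℂ) * Complex.I) * (2 * Complex.sin (↑(s/2)) * Complex.I) := by
    rw [Complex.sin]
    have h1 : Complex.exp ((↑(s/2):ℂ) * Complex.I) * Complex.exp ((↑(s/2):ℂ) * Complex.I)
        = Complex.exp ((s:ℂ) * Complex.I) := by rw [← Complex.exp_add]; push_cast; ring_nf
    have h2 : Complex.exp ((↑(s/2):ℂ) * Complex.I) * Complex.exp (-(↑(s/2):ℂ) * Complex.I) = 1 := by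
      rw [← Complex.exp_add]; ring_nf; exact Complex.exp_zero
    linear_combination (-1 : ℂ) * h1 + h2
      - Complex.exp ((↑(s/2):ℂ)*Complex.I)
        * (Complex.exp (-(↑(s/2):ℂ)*Complex.I) - Complex.exp ((↑(s/2):ℂ)*Complex.I))
        * Complex.I_sq
  rw [key, norm_mul, Complex.norm_exp_ofReal_mul_I, one_mul, ← Complex.ofReal_sin]
  push_cast
  simp only [norm_mul, Complex.norm_two, Complex.norm_I, mul_one]
  rw [show ((s:ℂ)/2) = ((s/2 : ℝ) : ℂ) by push_cast; ring, ← Complex.ofReal_sin,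
    Complex.norm_real, Real.norm_eq_abs]


lemma Afun_nonneg (s : ℝ) : 0 ≤ Afun s := by
  have : (0:ℝ) ≤ ‖Complex.exp ((s:ℂ) * Complex.I) - 1‖ / 2 := by positivity
  have := Real.arcsin_nonneg.2 this
  rw [Afun]; linarith

lemma Afun_eq_abs {s : ℝ} (h : |s| ≤ π) : Afun s = |s| := by
  have heven : ∀ t : ℝ, 0 ≤ t → t ≤ π → Afun t = t := by
    intro t ht hpi
    rw [Afun, norm_exp_sub_one]
    have hs : Real.sin (t/2) ≥ 0 := Real.sin_nonneg_of_nonneg_of_le_pi (by linarith) (by linarith)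
    rw [abs_of_nonneg hs]
    have : 2 * Real.sin (t/2) / 2 = Real.sin (t/2) := by ring
    rw [this, Real.arcsin_sin (by linarith [pi_pos]) (by linarith)]
    ring
  have hAneg : Afun (-s) = Afun s := by
    unfold Afun
    have hconj : Complex.exp ((↑(-s):ℂ) * Complex.I) - 1
        = starRingEnd ℂ (Complex.exp ((s:ℂ) * Complex.I) - 1) := by
      rw [map_sub, map_one, ← Complex.exp_conj]
      congr 1
      rw [map_mul, Complex.conj_I, Complex.conj_ofReal]
      push_cast; ring
    rw [hconj, Complex.norm_conj]
  rcases le_or_gt 0 s with hs | hs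
  · rw [abs_of_nonneg hs] at h ⊢; exact heven s hs h
  · rw [abs_of_neg hs] at h ⊢
    rw [← hAneg]; exact heven (-s) (by linarith) h

lemma Afun_periodic (s : ℝ) (k : ℤ) : Afun (s + 2*π*k) = Afun s := by
  rw [Afun, Afun]
  congr 3
  have : ((↑(s + 2*π*k) : ℂ)) * Complex.I = (s:ℂ) * Complex.I + 2*π*(k:ℂ)*Complex.I := by
    push_cast; ring
  rw [this, Complex.exp_add]
  have : Complex.exp (2*π*(k:ℂ)*Complex.I) = 1 := by
    have := Complex.exp_int_mul_two_pi_mul_I k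
    rw [← this]; congr 1; push_cast; ring
  rw [this, mul_one]

lemma round_helper (s : ℝ) : |s - 2*π*(round (s/(2*π)))| ≤ π := by
  have h2π : (0:ℝ) < 2*π := by linarith [pi_pos]
  have := abs_sub_round (s/(2*π))
  have h1 : |s - 2*π*(round (s/(2*π)))| = 2*π * |s/(2*π) - round (s/(2*π))| := by
    have he : s - 2*π*(round (s/(2*π))) = 2*π*(s/(2*π) - round (s/(2*π))) := by field_simp
    rw [he, abs_mul, abs_of_pos h2π]
  rw [h1]
  calc 2*π * |s/(2*π) - round (s/(2*π))| ≤ 2*π * (1/2) := by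
        apply mul_le_mul_of_nonneg_left this (le_of_lt h2π)
    _ = π := by ring

lemma Afun_le (s : ℝ) : Afun s ≤ |s| := by
  set k := round (s/(2*π)) with hk
  have h1 : |s - 2*π*k| ≤ π := round_helper s
  have h2 : Afun s = |s - 2*π*k| := by
    have : Afun ((s - 2*π*k) + 2*π*k) = Afun (s - 2*π*k) := Afun_periodic _ k
    rw [show (s - 2*π*k) + 2*π*k = s by ring] at this
    rw [this, Afun_eq_abs h1]
  rw [h2]
  rcases eq_or_ne k 0 with h | h
  · simp [h]
  · have hka : (1:ℝ) ≤ |(k:ℝ)| := by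
      have := Int.one_le_abs (by exact_mod_cast h : k ≠ 0)
      calc (1:ℝ) = ((1:ℤ):ℝ) := by norm_num
        _ ≤ ((|k|:ℤ):ℝ) := by exact_mod_cast this
        _ = |(k:ℝ)| := by push_cast; ring
    have : 2*π*|(k:ℝ)| - |s - 2*π*k| ≤ |s| := by
      have hmain := abs_sub_abs_le_abs_sub (2*π*(k:ℝ)) (2*π*(k:ℝ) - s)
      rw [show 2*π*(k:ℝ) - (2*π*(k:ℝ) - s) = s by ring] at hmain
      have e1 : |s - 2*π*(k:ℝ)| = |2*π*(k:ℝ) - s| := abs_sub_comm _ _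
      calc 2*π*|(k:ℝ)| - |s - 2*π*(k:ℝ)| = |2*π*(k:ℝ)| - |2*π*(k:ℝ) - s| := by
            rw [e1, abs_mul, abs_of_pos (by linarith [pi_pos] : (0:ℝ) < 2*π)]
      _ ≤ |s| := hmain
    have hπ : π ≤ 2*π*|(k:ℝ)| - π := by nlinarith [pi_pos]
    linarith

lemma continuous_G {n : ℕ} (x : Fin n → S1) :
    Continuous (fun p : S1 => ∑ i, (dS1 p (x i))^2) := by
  apply continuous_finset_sum
  intro i _
  apply Continuous.pow
  unfold dS1
  apply Continuous.mul continuous_const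
  apply Real.continuous_arcsin.comp
  exact ((continuous_subtype_val.sub continuous_const).norm).div_const 2

lemma sum_sq_expand {n : ℕ} (c : ℝ) (g : Fin n → ℝ) :
    ∑ i, (c - g i)^2 = n*c^2 - 2*c*(∑ i, g i) + ∑ i, (g i)^2 := by
  have h : ∀ i ∈ Finset.univ, (c - g i)^2 = c^2 - 2*c*g i + (g i)^2 := fun i _ => by ring
  rw [Finset.sum_congr rfl h]
  rw [Finset.sum_add_distrib, Finset.sum_sub_distrib, Finset.sum_const, ← Finset.mul_sum]
  simp [nsmul_eq_mul]

set_option maxHeartbeats 1000000 in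
lemma key {n : ℕ} (hn : 0 < n) (x : Fin n → S1)
    (hgood : ∀ k k' : Fin n → ℤ,
      (∃ j, (n:ℤ) * (k j - k' j) ≠ ∑ l, (k l - k' l)) →
      ∑ i, (((n:ℤ) * (k i - k' i) - ∑ l, (k l - k' l) : ℤ) : ℝ) * invChart basePt (x i) ≠
        π * ((((∑ l, (k l - k' l)) * (∑ i, (k i + k' i))
          - (n:ℤ) * ∑ i, ((k i - k' i) * (k i + k' i)) : ℤ)) : ℝ)) :
    ∃ pstar : S1, ∀ q : S1, q ≠ pstar →
      ∑ i, (dS1 pstar (x i))^2 < ∑ i, (dS1 q (x i))^2 := by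
  obtain ⟨pstar, -, hmin⟩ :=
    isCompact_univ.exists_isMinOn (univ_nonempty) (continuous_G x).continuousOn
  refine ⟨pstar, fun q hq => ?_⟩
  by_contra hcon
  push_neg at hcon
  have hmin' : ∀ p : S1, ∑ i, (dS1 pstar (x i))^2 ≤ ∑ i, (dS1 p (x i))^2 :=
    fun p => hmin (mem_univ p)
  have heq : ∑ i, (dS1 q (x i))^2 = ∑ i, (dS1 pstar (x i))^2 := le_antisymm hcon (hmin' q)
  set ψ : Fin n → ℝ := fun i => invChart basePt (x i) with hψdef
  set φ : ℝ := invChart basePt pstar with hφdef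
  set χ : ℝ := invChart basePt q with hχdef
  have hxch : ∀ i, x i = chart basePt (ψ i) := fun i => (chart_invChart (x i)).symm
  have hpch : pstar = chart basePt φ := (chart_invChart pstar).symm
  have hqch : q = chart basePt χ := (chart_invChart q).symm
  have hφχ : φ ≠ χ := fun h => hq (by rw [hqch, hpch, h])
  set k : Fin n → ℤ := fun i => round ((φ - ψ i)/(2*π)) with hkdef
  set k' : Fin n → ℤ := fun i => round ((χ - ψ i)/(2*π)) with hk'def
  set b : Fin n → ℝ := fun i => ψ i + 2*π*(k i) with hbdef
  set b' : Fin n → ℝ := fun i => ψ i + 2*π*(k' i) with hb'def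
  have hd : ∀ (θ : ℝ) (i : Fin n), dS1 (chart basePt θ) (x i) = Afun (θ - b i) := by
    intro θ i
    rw [hxch i, dS1_chart]
    have h1 : θ - ψ i = (θ - b i) + 2*π*(k i) := by rw [hbdef]; ring
    rw [h1, Afun_periodic]
  have hd' : ∀ (θ : ℝ) (i : Fin n), dS1 (chart basePt θ) (x i) = Afun (θ - b' i) := by
    intro θ i
    rw [hxch i, dS1_chart]
    have h1 : θ - ψ i = (θ - b' i) + 2*π*(k' i) := by rw [hb'def]; ring
    rw [h1, Afun_periodic]
  have hGp : ∑ i, (dS1 pstar (x i))^2 = ∑ i, (φ - b i)^2 := by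
    apply Finset.sum_congr rfl
    intro i _
    have e : φ - b i = (φ - ψ i) - 2*π*(round ((φ - ψ i)/(2*π))) := by
      simp only [hbdef, hkdef]; ring
    rw [hpch, hd φ i, Afun_eq_abs (by rw [e]; exact round_helper _), sq_abs]
  have hGq : ∑ i, (dS1 q (x i))^2 = ∑ i, (χ - b' i)^2 := by
    apply Finset.sum_congr rfl
    intro i _
    have e : χ - b' i = (χ - ψ i) - 2*π*(round ((χ - ψ i)/(2*π))) := by
      simp only [hb'def, hk'def]; ring
    rw [hqch, hd' χ i, Afun_eq_abs (by rw [e]; exact round_helper _), sq_abs]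
  have hle : ∀ θ : ℝ, ∑ i, (φ - b i)^2 ≤ ∑ i, (θ - b i)^2 := by
    intro θ
    rw [← hGp]
    calc ∑ i, (dS1 pstar (x i))^2 ≤ ∑ i, (dS1 (chart basePt θ) (x i))^2 := hmin' _
      _ ≤ ∑ i, (θ - b i)^2 := by
          apply Finset.sum_le_sum
          intro i _
          rw [hd θ i, ← sq_abs (θ - b i)]
          exact pow_le_pow_left₀ (Afun_nonneg _) (Afun_le _) 2
  have hle' : ∀ θ : ℝ, ∑ i, (χ - b' i)^2 ≤ ∑ i, (θ - b' i)^2 := by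
    intro θ
    rw [← hGq, heq]
    calc ∑ i, (dS1 pstar (x i))^2 ≤ ∑ i, (dS1 (chart basePt θ) (x i))^2 := hmin' _
      _ ≤ ∑ i, (θ - b' i)^2 := by
          apply Finset.sum_le_sum
          intro i _
          rw [hd' θ i, ← sq_abs (θ - b' i)]
          exact pow_le_pow_left₀ (Afun_nonneg _) (Afun_le _) 2
  have hn0 : (0:ℝ) < n := by exact_mod_cast hn
  -- vertices
  have vertex : ∀ (c : ℝ) (g : Fin n → ℝ), (∀ θ : ℝ, ∑ i, (c - g i)^2 ≤ ∑ i, (θ - g i)^2) →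
      (n:ℝ) * c = ∑ i, g i := by
    intro c g hmin2
    set v : ℝ := (∑ i, g i)/n with hv
    have hnv : (∑ i, g i) = (n:ℝ) * v := by rw [hv]; field_simp
    have h1 := hmin2 v
    rw [sum_sq_expand c g, sum_sq_expand v g, hnv] at h1
    have h2 : (n:ℝ) * (c - v)^2 ≤ 0 := by nlinarith [h1]
    have h3 : (c - v)^2 ≤ 0 := by
      by_contra hcc
      push_neg at hcc
      nlinarith [h2]
    have h5 : (c - v)^2 = 0 := le_antisymm h3 (sq_nonneg _)
    have h6 : c - v = 0 := by
      have := pow_eq_zero_iff (n := 2) (by norm_num) |>.mp h5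
      exact this
    have h7 : c = v := by linarith
    rw [h7, ← hnv]
  have H1 : (n:ℝ) * φ = ∑ i, b i := vertex φ b hle
  have H2 : (n:ℝ) * χ = ∑ i, b' i := vertex χ b' hle'
  have hE3 : ∑ i, (φ - b i)^2 = ∑ i, (χ - b' i)^2 := by rw [← hGp, ← hGq]; exact heq.symm
  set Sψ := ∑ i, ψ i with hSψ
  set Sψ2 := ∑ i, (ψ i)^2 with hSψ2
  set Sk := ∑ i, ((k i):ℝ) with hSk
  set Sk' := ∑ i, ((k' i):ℝ) with hSk'
  set Skψ := ∑ i, ((k i):ℝ) * ψ i with hSkψ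
  set Sk'ψ := ∑ i, ((k' i):ℝ) * ψ i with hSk'ψ
  set Sk2 := ∑ i, ((k i):ℝ)^2 with hSk2
  set Sk'2 := ∑ i, ((k' i):ℝ)^2 with hSk'2
  have hbsum : ∑ i, b i = Sψ + 2*π*Sk := by
    rw [hSψ, hSk, Finset.mul_sum, ← Finset.sum_add_distrib]
  have hb'sum : ∑ i, b' i = Sψ + 2*π*Sk' := by
    rw [hSψ, hSk', Finset.mul_sum, ← Finset.sum_add_distrib]
  have hbsq : ∑ i, (b i)^2 = Sψ2 + 4*π*Skψ + 4*π^2*Sk2 := by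
    rw [hSψ2, hSkψ, hSk2, Finset.mul_sum, Finset.mul_sum, ← Finset.sum_add_distrib,
      ← Finset.sum_add_distrib]
    exact Finset.sum_congr rfl fun i _ => by simp only [hbdef]; ring
  have hb'sq : ∑ i, (b' i)^2 = Sψ2 + 4*π*Sk'ψ + 4*π^2*Sk'2 := by
    rw [hSψ2, hSk'ψ, hSk'2, Finset.mul_sum, Finset.mul_sum, ← Finset.sum_add_distrib,
      ← Finset.sum_add_distrib]
    exact Finset.sum_congr rfl fun i _ => by simp only [hb'def]; ring
  have H1' : (n:ℝ) * φ = Sψ + 2*π*Sk := by rw [H1, hbsum]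
  have H2' : (n:ℝ) * χ = Sψ + 2*π*Sk' := by rw [H2, hb'sum]
  have H3 : (n:ℝ)*φ^2 - 2*φ*(Sψ + 2*π*Sk) + (Sψ2 + 4*π*Skψ + 4*π^2*Sk2)
      = (n:ℝ)*χ^2 - 2*χ*(Sψ + 2*π*Sk') + (Sψ2 + 4*π*Sk'ψ + 4*π^2*Sk'2) := by
    have e1 := sum_sq_expand φ b
    have e2 := sum_sq_expand χ b'
    rw [e1, e2, hbsum, hb'sum, hbsq, hb'sq] at hE3
    exact hE3
  have hSkMr : ((∑ l, (k l - k' l) : ℤ) : ℝ) = Sk - Sk' := by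
    rw [hSk, hSk', ← Finset.sum_sub_distrib]
    push_cast
    rfl
  have hj : ∃ j, (n:ℤ) * (k j - k' j) ≠ ∑ l, (k l - k' l) := by
    by_contra hcf
    push_neg at hcf
    have h0 := hcf ⟨0, hn⟩
    set m0 : ℤ := k ⟨0, hn⟩ - k' ⟨0, hn⟩ with hm0
    have hMn : ((∑ l, (k l - k' l) : ℤ) : ℝ) = (n:ℝ) * (m0:ℝ) := by
      rw [← h0]; push_cast; ring
    have hMeq : (n:ℝ)*(φ - χ) = 2*π*(Sk - Sk') := by linarith [H1', H2']
    have hφχ2 : (n:ℝ)*(φ - χ) = (n:ℝ)*(2*π*(m0:ℝ)) := by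
      rw [hMeq, ← hSkMr, hMn]; ring
    have hφχ3 : φ - χ = 2*π*(m0:ℝ) := mul_left_cancel₀ (ne_of_gt hn0) hφχ2
    have hb1 := invChart_mem pstar
    have hb2 := invChart_mem q
    have habs : |φ - χ| < 2*π := by
      rw [abs_lt]
      constructor
      · have h1 := hb1.1; have h2 := hb2.2
        rw [← hφdef] at h1; rw [← hχdef] at h2
        linarith
      · have h1 := hb1.2; have h2 := hb2.1
        rw [← hφdef] at h1; rw [← hχdef] at h2
        linarith
    have hm0abs : |(m0:ℝ)| < 1 := by
      rw [hφχ3, abs_mul, abs_of_pos (by linarith [pi_pos] : (0:ℝ) < 2*π)] at habs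
      have h2π : (0:ℝ) < 2*π := by linarith [pi_pos]
      exact (mul_lt_mul_iff_right₀ h2π).mp (by linarith : 2*π*|(m0:ℝ)| < 2*π*1)
    have hm00 : m0 = 0 := by
      have h9 : ((|m0|:ℤ):ℝ) < 1 := by rwa [← Int.cast_abs] at hm0abs
      have h10 : (|m0|:ℤ) < 1 := by exact_mod_cast h9
      have h11 : |m0| = 0 := le_antisymm (by omega) (abs_nonneg m0)
      exact abs_eq_zero.mp h11
    apply hφχ
    rw [hm00] at hφχ3
    push_cast at hφχ3
    linarith
  apply hgood k k' hj
  have hT : (n:ℝ)*Skψ - (n:ℝ)*Sk'ψ - (Sk - Sk')*Sψ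
      = π*((Sk - Sk')*(Sk + Sk') - (n:ℝ)*(Sk2 - Sk'2)) := by
    have h4 : 4*π*((n:ℝ)*Skψ - (n:ℝ)*Sk'ψ - (Sk - Sk')*Sψ)
        = 4*π*(π*((Sk - Sk')*(Sk + Sk') - (n:ℝ)*(Sk2 - Sk'2))) := by
      linear_combination (n:ℝ) * H3 - ((n:ℝ)*φ - Sψ - 2*π*Sk) * H1' + ((n:ℝ)*χ - Sψ - 2*π*Sk') * H2'
    exact mul_left_cancel₀ (by positivity : (4*π:ℝ) ≠ 0) h4
  have hLHS : ∑ i, (((n:ℤ) * (k i - k' i) - ∑ l, (k l - k' l) : ℤ) : ℝ) * ψ i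
      = (n:ℝ)*Skψ - (n:ℝ)*Sk'ψ - (Sk - Sk')*Sψ := by
    have hterm : ∀ i ∈ Finset.univ, (((n:ℤ) * (k i - k' i) - ∑ l, (k l - k' l) : ℤ) : ℝ) * ψ i
        = (n:ℝ)*(((k i):ℝ) * ψ i) - (n:ℝ)*(((k' i):ℝ) * ψ i) - ((Sk - Sk')*ψ i) := by
      intro i _
      rw [show (((n:ℤ) * (k i - k' i) - ∑ l, (k l - k' l) : ℤ) : ℝ)
          = (n:ℝ)*((k i):ℝ) - (n:ℝ)*((k' i):ℝ) - (Sk - Sk') by rw [← hSkMr]; push_cast; ring]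
      ring
    rw [Finset.sum_congr rfl hterm, Finset.sum_sub_distrib, Finset.sum_sub_distrib,
      ← Finset.mul_sum, ← Finset.mul_sum, ← Finset.mul_sum, ← hSkψ, ← hSk'ψ, ← hSψ]
  have hRHS : π * ((((∑ l, (k l - k' l)) * (∑ i, (k i + k' i))
        - (n:ℤ) * ∑ i, ((k i - k' i) * (k i + k' i)) : ℤ)) : ℝ)
      = π*((Sk - Sk')*(Sk + Sk') - (n:ℝ)*(Sk2 - Sk'2)) := by
    congr 1
    push_cast
    rw [Finset.sum_sub_distrib, Finset.sum_add_distrib]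
    rw [show ∑ i, (((k i):ℝ) - ((k' i):ℝ)) * (((k i):ℝ) + ((k' i):ℝ))
        = ∑ i, (((k i):ℝ)^2 - ((k' i):ℝ)^2) from Finset.sum_congr rfl fun i _ => by ring]
    rw [Finset.sum_sub_distrib, ← hSk, ← hSk', ← hSk2, ← hSk'2]
  rw [hLHS, hRHS, hT]

lemma invChart_injective : Function.Injective (invChart basePt) := by
  intro a b h
  rw [← chart_invChart a, ← chart_invChart b, h]

lemma measurable_invChart : Measurable (invChart basePt) := by
  unfold invChart
  have harg : Measurable fun p : S1 => Complex.arg ((p:ℂ) / ((basePt : S1):ℂ)) :=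
    Complex.measurable_arg.comp (measurable_subtype_coe.div_const _)
  exact Measurable.ite (harg (measurableSet_singleton π)) measurable_const harg

lemma null_affine {m : ℕ} (μ : Measure S1) [IsProbabilityMeasure μ]
    (hna : ∀ p : S1, μ {p} = 0) (a : Fin (m+1) → ℤ) (j : Fin (m+1)) (haj : a j ≠ 0) (C : ℝ) :
    Measure.pi (fun _ : Fin (m+1) => μ)
      {y | ∑ i, ((a i):ℝ) * invChart basePt (y i) = C} = 0 := by
  set f := invChart basePt with hf
  have hfm : Measurable f := measurable_invChart
  have hmp := measurePreserving_piFinSuccAbove (fun _ : Fin (m+1) => μ) j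
  set B : Set (S1 × (Fin m → S1)) :=
    {z | ((a j):ℝ) * f z.1 + ∑ i, ((a (j.succAbove i)):ℝ) * f (z.2 i) = C} with hB
  have hBm : MeasurableSet B := by
    have hg : Measurable fun z : S1 × (Fin m → S1) =>
        ((a j):ℝ) * f z.1 + ∑ i, ((a (j.succAbove i)):ℝ) * f (z.2 i) := by
      apply Measurable.add
      · exact (hfm.comp measurable_fst).const_mul _
      · apply Finset.measurable_sum
        intro i _
        exact (hfm.comp ((measurable_pi_apply i).comp measurable_snd)).const_mul _
    exact hg (measurableSet_singleton C)
  have hpre : {y : Fin (m+1) → S1 | ∑ i, ((a i):ℝ) * f (y i) = C}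
      = (MeasurableEquiv.piFinSuccAbove (fun _ : Fin (m+1) => S1) j) ⁻¹' B := by
    ext y
    simp only [hB, mem_setOf_eq, mem_preimage]
    rw [Fin.sum_univ_succAbove (fun i => ((a i):ℝ) * f (y i)) j]
    rfl
  rw [hpre, hmp.measure_preimage hBm.nullMeasurableSet]
  rw [Measure.prod_apply_symm hBm]
  have hz : ∀ z2 : Fin m → S1, μ ((fun t => (t, z2)) ⁻¹' B) = 0 := by
    intro z2
    set c : ℝ := (C - ∑ i, ((a (j.succAbove i)):ℝ) * f (z2 i)) / ((a j):ℝ) with hc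
    have haj' : ((a j):ℝ) ≠ 0 := Int.cast_ne_zero.mpr haj
    have hsub : ((fun t => (t, z2)) ⁻¹' B) ⊆ f ⁻¹' {c} := by
      intro t ht
      simp only [hB, mem_preimage, mem_setOf_eq] at ht ⊢
      rw [hc, mem_singleton_iff, eq_div_iff haj']
      linarith [ht]
    have hone : μ (f ⁻¹' {c}) = 0 := by
      rcases eq_empty_or_nonempty (f ⁻¹' {c}) with h | ⟨x0, hx0⟩
      · simp [h]
      · have hss : f ⁻¹' {c} ⊆ {x0} := by
          intro x hx
          simp only [mem_preimage, mem_singleton_iff] at hx hx0 ⊢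
          exact invChart_injective (hx.trans hx0.symm)
        exact le_antisymm ((measure_mono hss).trans (hna x0).le) zero_le
    exact measure_mono_null hsub hone
  simp only [hz]
  simp


/-- Lemma `lemme.EFM`: for i.i.d. observations from a non-atomic law `μ`
on `S¹`, the empirical Fréchet mean exists (the empirical Fréchet functional has a
unique global minimizer) almost surely. -/
theorem empirical_frechet_mean_exists (μ : Measure S1) [IsProbabilityMeasure μ]
    (hna : ∀ p : S1, μ {p} = 0)
    {Ω : Type} [MeasurableSpace Ω] (P : Measure Ω) [IsProbabilityMeasure P]
    (n : ℕ) (hn : 0 < n) (X : Fin n → Ω → S1) (hX : ∀ i, Measurable (X i))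
    (hlaw : ∀ i, Measure.map (X i) P = μ)
    (hindep : ProbabilityTheory.iIndepFun X P) :
    ∀ᵐ ω ∂P, ∃ pstar : S1, ∀ q : S1, q ≠ pstar →
      (1 / (2 * (n:ℝ))) * ∑ i, (dS1 pstar (X i ω))^2 <
      (1 / (2 * (n:ℝ))) * ∑ i, (dS1 q (X i ω))^2 := by
    classical
  obtain ⟨m, rfl⟩ : ∃ m, n = m + 1 := ⟨n-1, (Nat.succ_pred_eq_of_pos hn).symm⟩
  have hXmeas : Measurable fun ω (i : Fin (m+1)) => X i ω := measurable_pi_lambda _ hX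
  have hmap : Measure.map (fun ω (i : Fin (m+1)) => X i ω) P = Measure.pi (fun _ : Fin (m+1) => μ) := by
    refine (Measure.pi_eq fun s hs => ?_).symm
    rw [Measure.map_apply hXmeas (MeasurableSet.univ_pi hs)]
    have hpre : (fun ω (i : Fin (m+1)) => X i ω) ⁻¹' (univ.pi s) = ⋂ i, X i ⁻¹' s i := by
      ext ω; simp [Set.mem_pi]
    rw [hpre, hindep.meas_iInter (fun i => ⟨s i, hs i, rfl⟩)]
    exact Finset.prod_congr rfl fun i _ => by rw [← hlaw i, Measure.map_apply (hX i) (hs i)]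
  set Bad : (Fin (m+1) → ℤ) × (Fin (m+1) → ℤ) → Set (Fin (m+1) → S1) := fun kk =>
    {y | (∃ j, ((m+1:ℕ):ℤ) * (kk.1 j - kk.2 j) ≠ ∑ l, (kk.1 l - kk.2 l)) ∧
      ∑ i, ((((m+1:ℕ):ℤ) * (kk.1 i - kk.2 i) - ∑ l, (kk.1 l - kk.2 l) : ℤ) : ℝ) * invChart basePt (y i)
        = π * ((((∑ l, (kk.1 l - kk.2 l)) * (∑ i, (kk.1 i + kk.2 i))
          - ((m+1:ℕ):ℤ) * ∑ i, ((kk.1 i - kk.2 i) * (kk.1 i + kk.2 i)) : ℤ)) : ℝ)} with hBad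
  have hBadsub : ∀ kk, (∃ j, ((m+1:ℕ):ℤ) * (kk.1 j - kk.2 j) ≠ ∑ l, (kk.1 l - kk.2 l)) →
      Bad kk = {y : Fin (m+1) → S1 |
        ∑ i, ((((m+1:ℕ):ℤ) * (kk.1 i - kk.2 i) - ∑ l, (kk.1 l - kk.2 l) : ℤ) : ℝ) * invChart basePt (y i)
        = π * ((((∑ l, (kk.1 l - kk.2 l)) * (∑ i, (kk.1 i + kk.2 i))
          - ((m+1:ℕ):ℤ) * ∑ i, ((kk.1 i - kk.2 i) * (kk.1 i + kk.2 i)) : ℤ)) : ℝ)} := by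
    intro kk hc
    ext y
    simp only [hBad, mem_setOf_eq, hc, true_and]
  have hBadMeas : ∀ kk, MeasurableSet (Bad kk) := by
    intro kk
    by_cases hc : ∃ j, ((m+1:ℕ):ℤ) * (kk.1 j - kk.2 j) ≠ ∑ l, (kk.1 l - kk.2 l)
    · rw [hBadsub kk hc]
      have hg : Measurable fun y : Fin (m+1) → S1 =>
          ∑ i, ((((m+1:ℕ):ℤ) * (kk.1 i - kk.2 i) - ∑ l, (kk.1 l - kk.2 l) : ℤ) : ℝ)
            * invChart basePt (y i) := by
        apply Finset.measurable_sum
        intro i _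
        exact (measurable_invChart.comp (measurable_pi_apply i)).const_mul _
      exact hg (measurableSet_singleton _)
    · have : Bad kk = ∅ := by
        ext y; simp only [hBad, mem_setOf_eq, hc, false_and, mem_empty_iff_false]
      rw [this]; exact MeasurableSet.empty
  have hBadNull : ∀ kk, Measure.pi (fun _ : Fin (m+1) => μ) (Bad kk) = 0 := by
    intro kk
    by_cases hc : ∃ j, ((m+1:ℕ):ℤ) * (kk.1 j - kk.2 j) ≠ ∑ l, (kk.1 l - kk.2 l)
    · rw [hBadsub kk hc]
      obtain ⟨j, hj⟩ := hc
      exact null_affine μ hna (fun i => ((m+1:ℕ):ℤ) * (kk.1 i - kk.2 i) - ∑ l, (kk.1 l - kk.2 l)) j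
        (sub_ne_zero.mpr hj) _
    · have : Bad kk = ∅ := by
        ext y; simp only [hBad, mem_setOf_eq, hc, false_and, mem_empty_iff_false]
      rw [this]; simp
  have hUnull : P (⋃ kk, (fun ω (i : Fin (m+1)) => X i ω) ⁻¹' (Bad kk)) = 0 := by
    apply measure_iUnion_null
    intro kk
    rw [← Measure.map_apply hXmeas (hBadMeas kk), hmap]
    exact hBadNull kk
  have hae : ∀ᵐ ω ∂P, ∀ kk, (fun i => X i ω) ∉ Bad kk := by
    rw [ae_iff]
    apply measure_mono_null _ hUnull
    intro ω hω
    simp only [mem_setOf_eq] at hω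
    push_neg at hω
    obtain ⟨kk, hkk⟩ := hω
    exact mem_iUnion.mpr ⟨kk, hkk⟩
  filter_upwards [hae] with ω hω
  have hgood : ∀ k k' : Fin (m+1) → ℤ,
      (∃ j, ((m+1:ℕ):ℤ) * (k j - k' j) ≠ ∑ l, (k l - k' l)) →
      ∑ i, ((((m+1:ℕ):ℤ) * (k i - k' i) - ∑ l, (k l - k' l) : ℤ) : ℝ) * invChart basePt (X i ω) ≠
        π * ((((∑ l, (k l - k' l)) * (∑ i, (k i + k' i))
          - ((m+1:ℕ):ℤ) * ∑ i, ((k i - k' i) * (k i + k' i)) : ℤ)) : ℝ) := by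
    intro k k' hj hEq
    exact hω (k, k') ⟨hj, hEq⟩
  obtain ⟨pstar, hstar⟩ := key (Nat.succ_pos m) (fun i => X i ω) hgood
  refine ⟨pstar, fun q hq => ?_⟩
  have hlt := hstar q hq
  have hpos : (0:ℝ) < 1 / (2 * ((m+1:ℕ):ℝ)) := by
    have : (0:ℝ) < ((m+1:ℕ):ℝ) := by exact_mod_cast hn
    positivity
  exact (mul_lt_mul_iff_right₀ hpos).mpr hlt
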